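/- arXiv:2509.03898 — 2 statements merged into one kernel-verified Lean document; each statement's English description precedes it below -/
import Mathlib

section
/- Let A ∈ ℝ^{m×d} and let S ≥ 1 be an integer such that the restricted isometry constants of A satisfy δ_{3S} + 3·δ_{4S} < 2. Then there exists a constant C_S > 0, depending only on δ_{4S}, with the following property: for every σ ≥ 0, every x ∈ ℝ^d supported on a set of cardinality at most S, every e ∈ ℝ^m with ‖e‖₂ ≤ σ, and y = Ax + e, any minimizer x⋆ of the problem min ‖z‖₁ subject to ‖Az − y‖₂ ≤ σ satisfies ‖x⋆ − x‖₂ ≤ C_S·σ. -/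
open Matrix

/-- The Euclidean (`ℓ²`) norm on `ℝ^n`. -/
noncomputable def l2norm {n : ℕ} (x : Fin n → ℝ) : ℝ := Real.sqrt (∑ i, (x i) ^ 2)

/-- The `ℓ¹` norm on `ℝ^n`. -/
def l1norm {n : ℕ} (x : Fin n → ℝ) : ℝ := ∑ i, |x i|

/-- `x ∈ ℝ^d` is `S`-sparse: its support has cardinality at most `S`. -/
def IsSparse {d : ℕ} (S : ℕ) (x : Fin d → ℝ) : Prop :=
  (Finset.univ.filter fun i => x i ≠ 0).card ≤ S

/-- The `S`-restricted isometry constant `δ_S(A)`: the smallest `δ ≥ 0` such that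
`(1 − δ)‖x‖₂² ≤ ‖Ax‖₂² ≤ (1 + δ)‖x‖₂²` for every `S`-sparse `x`. -/
noncomputable def RIC {m d : ℕ} (A : Matrix (Fin m) (Fin d) ℝ) (S : ℕ) : ℝ :=
  sInf {δ : ℝ | 0 ≤ δ ∧ ∀ x : Fin d → ℝ, IsSparse S x →
    (1 - δ) * l2norm x ^ 2 ≤ l2norm (A.mulVec x) ^ 2 ∧
    l2norm (A.mulVec x) ^ 2 ≤ (1 + δ) * l2norm x ^ 2}

lemma l2norm_nonneg {n : ℕ} (x : Fin n → ℝ) : 0 ≤ l2norm x := Real.sqrt_nonneg _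

lemma l2norm_sq {n : ℕ} (x : Fin n → ℝ) : l2norm x ^ 2 = ∑ i, (x i) ^ 2 :=
  Real.sq_sqrt (Finset.sum_nonneg fun i _ => sq_nonneg _)

lemma l2norm_eq {n : ℕ} (x : Fin n → ℝ) :
    l2norm x = ‖(WithLp.equiv 2 (Fin n → ℝ)).symm x‖ := by
  rw [EuclideanSpace.norm_eq]
  simp [l2norm, sq_abs]

lemma l2norm_add_le {n : ℕ} (x y : Fin n → ℝ) :
    l2norm (x + y) ≤ l2norm x + l2norm y := by
  rw [l2norm_eq, l2norm_eq, l2norm_eq]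
  rw [show (WithLp.equiv 2 (Fin n → ℝ)).symm (x + y)
      = (WithLp.equiv 2 (Fin n → ℝ)).symm x + (WithLp.equiv 2 (Fin n → ℝ)).symm y from rfl]
  exact norm_add_le _ _

lemma l2norm_neg {n : ℕ} (x : Fin n → ℝ) : l2norm (-x) = l2norm x := by
  simp [l2norm]

lemma l2norm_sum_le {n : ℕ} {ι : Type*} (s : Finset ι) (f : ι → Fin n → ℝ) :
    l2norm (∑ j ∈ s, f j) ≤ ∑ j ∈ s, l2norm (f j) := by
  classical
  induction s using Finset.cons_induction with
  | empty => simp [l2norm]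
  | cons a s ha ih =>
      rw [Finset.sum_cons, Finset.sum_cons]
      exact (l2norm_add_le _ _).trans (by linarith)

lemma ric_mem {m d : ℕ} (A : Matrix (Fin m) (Fin d) ℝ) (S : ℕ) :
    RIC A S ∈ {δ : ℝ | 0 ≤ δ ∧ ∀ x : Fin d → ℝ, IsSparse S x →
    (1 - δ) * l2norm x ^ 2 ≤ l2norm (A.mulVec x) ^ 2 ∧
    l2norm (A.mulVec x) ^ 2 ≤ (1 + δ) * l2norm x ^ 2} := by
  apply IsClosed.csInf_mem
  · have : {δ : ℝ | 0 ≤ δ ∧ ∀ x : Fin d → ℝ, IsSparse S x →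
        (1 - δ) * l2norm x ^ 2 ≤ l2norm (A.mulVec x) ^ 2 ∧
        l2norm (A.mulVec x) ^ 2 ≤ (1 + δ) * l2norm x ^ 2}
        = {δ : ℝ | 0 ≤ δ} ∩ ⋂ (x : Fin d → ℝ), {δ : ℝ | IsSparse S x →
        (1 - δ) * l2norm x ^ 2 ≤ l2norm (A.mulVec x) ^ 2 ∧
        l2norm (A.mulVec x) ^ 2 ≤ (1 + δ) * l2norm x ^ 2} := by
      ext δ; simp [Set.mem_iInter]
    rw [this]
    apply IsClosed.inter
    · exact isClosed_le continuous_const continuous_id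
    · apply isClosed_iInter
      intro x
      by_cases hx : IsSparse S x
      · have : {δ : ℝ | IsSparse S x →
            (1 - δ) * l2norm x ^ 2 ≤ l2norm (A.mulVec x) ^ 2 ∧
            l2norm (A.mulVec x) ^ 2 ≤ (1 + δ) * l2norm x ^ 2}
            = {δ : ℝ | (1 - δ) * l2norm x ^ 2 ≤ l2norm (A.mulVec x) ^ 2} ∩
              {δ : ℝ | l2norm (A.mulVec x) ^ 2 ≤ (1 + δ) * l2norm x ^ 2} := by
          ext δ; simp only [Set.mem_setOf_eq, Set.mem_inter_iff]; tauto
        rw [this]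
        apply IsClosed.inter
        · exact isClosed_le (by continuity) continuous_const
        · exact isClosed_le continuous_const (by continuity)
      · have : {δ : ℝ | IsSparse S x →
            (1 - δ) * l2norm x ^ 2 ≤ l2norm (A.mulVec x) ^ 2 ∧
            l2norm (A.mulVec x) ^ 2 ≤ (1 + δ) * l2norm x ^ 2} = Set.univ := by
          ext δ; simp [hx]
        rw [this]; exact isClosed_univ
  · -- nonempty
    refine ⟨(∑ i, ∑ j, (A i j)^2) + 1, ?_, ?_⟩
    · positivity
    · intro x _
      constructor
      · have h1 : (0:ℝ) ≤ ∑ i, ∑ j, (A i j)^2 := by positivity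
        have h2 : (0:ℝ) ≤ l2norm x ^ 2 := sq_nonneg _
        nlinarith [sq_nonneg (l2norm (A.mulVec x))]
      · rw [l2norm_sq, l2norm_sq]
        have key : ∀ i, (A.mulVec x i)^2 ≤ (∑ j, (A i j)^2) * (∑ j, (x j)^2) := by
          intro i
          have := Finset.sum_mul_sq_le_sq_mul_sq Finset.univ (fun j => A i j) x
          simpa [Matrix.mulVec, dotProduct] using this
        calc ∑ i, (A.mulVec x i)^2 ≤ ∑ i, (∑ j, (A i j)^2) * (∑ j, (x j)^2) :=
              Finset.sum_le_sum fun i _ => key i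
          _ = (∑ i, ∑ j, (A i j)^2) * (∑ j, (x j)^2) := by rw [Finset.sum_mul]
          _ ≤ (1 + ((∑ i, ∑ j, (A i j)^2) + 1)) * (∑ j, (x j)^2) := by
              apply mul_le_mul_of_nonneg_right (by linarith) (by positivity)
  · exact ⟨0, fun δ hδ => hδ.1⟩

def restr {d : ℕ} (T : Finset (Fin d)) (v : Fin d → ℝ) : Fin d → ℝ :=
  fun i => if i ∈ T then v i else 0

lemma sum_sq_restr {d : ℕ} (T : Finset (Fin d)) (v : Fin d → ℝ) :
    ∑ i, (restr T v i) ^ 2 = ∑ i ∈ T, (v i) ^ 2 := by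
  rw [← Finset.sum_filter_add_sum_filter_not Finset.univ (· ∈ T)]
  have h1 : ∀ i ∈ Finset.univ.filter (· ∈ T), (restr T v i)^2 = v i ^ 2 := by
    intro i hi; simp only [Finset.mem_filter] at hi; simp [restr, hi.2]
  have h2 : ∀ i ∈ Finset.univ.filter (¬ · ∈ T), (restr T v i)^2 = 0 := by
    intro i hi; simp only [Finset.mem_filter] at hi; simp [restr, hi.2]
  rw [Finset.sum_congr rfl h1, Finset.sum_congr rfl h2]
  simp [Finset.filter_mem_eq_inter]

lemma l2norm_restr_sq {d : ℕ} (T : Finset (Fin d)) (v : Fin d → ℝ) :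
    l2norm (restr T v) ^ 2 = ∑ i ∈ T, (v i) ^ 2 := by
  rw [l2norm_sq, sum_sq_restr]

lemma isSparse_restr {d : ℕ} (T : Finset (Fin d)) (v : Fin d → ℝ) {k : ℕ}
    (hk : T.card ≤ k) : IsSparse k (restr T v) := by
  unfold IsSparse
  refine le_trans (Finset.card_le_card ?_) hk
  intro i hi
  simp only [Finset.mem_filter, restr] at hi
  by_contra hiT
  simp [hiT] at hi

lemma chunk_take_sum {α M : Type*} [AddCommMonoid M] (K : ℕ) (l : List α) (f : α → M) :
    ∀ N : ℕ, ∑ j ∈ Finset.range N, (((l.drop (K*j)).take K).map f).sum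
      = ((l.take (K*N)).map f).sum := by
  intro N
  induction N with
  | zero => simp
  | succ N ih =>
      rw [Finset.sum_range_succ, ih, Nat.mul_succ, List.take_add, List.map_append,
        List.sum_append]

lemma chunk_sum {α M : Type*} [AddCommMonoid M] (K : ℕ) (l : List α) (f : α → M)
    (N : ℕ) (hN : l.length ≤ K * N) :
    ∑ j ∈ Finset.range N, (((l.drop (K*j)).take K).map f).sum = (l.map f).sum := by
  rw [chunk_take_sum, List.take_of_length_le hN]

lemma chunk_sublist {α : Type*} (l : List α) (a b : ℕ) : ((l.drop a).take b).Sublist l :=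
  ((l.drop a).take_sublist b).trans (l.drop_sublist a)

/-- Robust sparse recovery (Candès–Romberg–Tao): if `δ_{3S} + 3δ_{4S} < 2`, then there is a
constant `C_S > 0` such that for every `σ ≥ 0`, every `S`-sparse `x`, every perturbation `e` with
`‖e‖₂ ≤ σ` and `y = Ax + e`, any minimizer `x⋆` of `min ‖z‖₁ s.t. ‖Az − y‖₂ ≤ σ` satisfies
`‖x⋆ − x‖₂ ≤ C_S·σ`. -/
theorem stmt4 {m d : ℕ} (A : Matrix (Fin m) (Fin d) ℝ) (S : ℕ) (hS : 1 ≤ S)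
    (hRIP : RIC A (3 * S) + 3 * RIC A (4 * S) < 2) :
    ∃ C : ℝ, 0 < C ∧
      ∀ σ : ℝ, 0 ≤ σ → ∀ x : Fin d → ℝ, IsSparse S x →
        ∀ e : Fin m → ℝ, l2norm e ≤ σ →
          ∀ xstar : Fin d → ℝ,
            l2norm (A.mulVec xstar - (A.mulVec x + e)) ≤ σ →
            (∀ z : Fin d → ℝ, l2norm (A.mulVec z - (A.mulVec x + e)) ≤ σ →
              l1norm xstar ≤ l1norm z) →
            l2norm (xstar - x) ≤ C * σ := by
  classical
  obtain ⟨hδ3nonneg, hRIP3⟩ := ric_mem A (3*S)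
  obtain ⟨hδ4nonneg, hRIP4⟩ := ric_mem A (4*S)
  set δ3 := RIC A (3*S) with hδ3def
  set δ4 := RIC A (4*S) with hδ4def
  set c1 := Real.sqrt (1 - δ4) with hc1def
  set c2 := Real.sqrt (1 + δ3) * (Real.sqrt 3)⁻¹ with hc2def
  have h3pos : (0:ℝ) < Real.sqrt 3 := Real.sqrt_pos.mpr (by norm_num)
  have hc2eq : c2 = Real.sqrt ((1 + δ3) / 3) := by
    rw [hc2def, Real.sqrt_div (by linarith), div_eq_mul_inv]
  have hcc : c2 < c1 := by
    rw [hc2eq, hc1def]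
    apply Real.sqrt_lt_sqrt (by positivity)
    linarith
  have hc2nonneg : 0 ≤ c2 := by rw [hc2eq]; positivity
  have hc1pos : 0 < c1 := lt_of_le_of_lt hc2nonneg hcc
  set C := (1 + (Real.sqrt 3)⁻¹) * 2 / (c1 - c2) with hCdef
  have hCpos : 0 < C := by
    apply div_pos
    · have : (0:ℝ) < (Real.sqrt 3)⁻¹ := by positivity
      linarith
    · linarith
  refine ⟨C, hCpos, ?_⟩
  intro σ hσ x hxs e he xstar hfeas hmin
  set h := xstar - x with hhdef
  set T0 := Finset.univ.filter (fun i => x i ≠ 0) with hT0def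
  have hT0card : T0.card ≤ S := hxs
  have hx0 : ∀ i, i ∉ T0 → x i = 0 := by
    intro i hi
    by_contra hne
    exact hi (Finset.mem_filter.mpr ⟨Finset.mem_univ i, hne⟩)
  set K := 3*S with hKdef
  have hKpos : 0 < K := by omega
  have hKR : (0:ℝ) < Real.sqrt K := Real.sqrt_pos.mpr (by positivity)
  set l := ((Finset.univ \ T0).toList).mergeSort
      (fun a b => decide (|h b| ≤ |h a|)) with hldef
  have hperm : l.Perm (Finset.univ \ T0).toList := List.mergeSort_perm _ _
  have hnodup : l.Nodup := hperm.nodup_iff.mpr (Finset.nodup_toList _)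
  have hmem : ∀ i, i ∈ l ↔ i ∈ Finset.univ \ T0 := fun i =>
    hperm.mem_iff.trans (Finset.mem_toList)
  have hsorted : l.Pairwise (fun a b => |h b| ≤ |h a|) := by
    have := List.pairwise_mergeSort (le := fun a b => decide (|h b| ≤ |h a|))
      (by intro a b c hab hbc; simp only [decide_eq_true_eq] at *; linarith)
      (by intro a b; simpa using le_total |h b| |h a|)
      ((Finset.univ \ T0).toList)
    exact this.imp (by intro a b hab; simpa using hab)
  have hlen : l.length ≤ K * (d+1) := by
    have h1 : l.length = (Finset.univ \ T0).card := by
      rw [hperm.length_eq, Finset.length_toList]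
    have h2 : (Finset.univ \ T0).card ≤ d := by
      calc (Finset.univ \ T0).card ≤ (Finset.univ : Finset (Fin d)).card :=
            Finset.card_le_card (Finset.sdiff_subset)
        _ = d := by simp
    have : d ≤ K * (d+1) := by
      calc d ≤ 1 * (d+1) := by omega
        _ ≤ K * (d+1) := Nat.mul_le_mul_right _ hKpos
    omega
  set chunkL : ℕ → List (Fin d) := fun j => (l.drop (K*j)).take K with hchunkdef
  set B : ℕ → Finset (Fin d) := fun j => (chunkL j).toFinset with hBdef
  have hchunknodup : ∀ j, (chunkL j).Nodup := fun j =>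
    (chunk_sublist l (K*j) K).nodup hnodup
  have hBsum : ∀ (j : ℕ) (f : Fin d → ℝ), ∑ i ∈ B j, f i = ((chunkL j).map f).sum :=
    fun j f => List.sum_toFinset f (hchunknodup j)
  have hBcard : ∀ j, (B j).card ≤ K := by
    intro j
    rw [hBdef]
    calc (chunkL j).toFinset.card = (chunkL j).length :=
          List.toFinset_card_of_nodup (hchunknodup j)
      _ ≤ K := by rw [hchunkdef]; simpa using (List.length_take _ _).trans_le (min_le_left _ _)
  have hBsub : ∀ j, B j ⊆ Finset.univ \ T0 := by
    intro j i hi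
    rw [hBdef, List.mem_toFinset] at hi
    exact (hmem i).mp ((chunk_sublist l (K*j) K).subset hi)
  have hglobal : ∀ (f : Fin d → ℝ),
      ∑ j ∈ Finset.range (d+1), ∑ i ∈ B j, f i = ∑ i ∈ Finset.univ \ T0, f i := by
    intro f
    have h1 : ∀ j ∈ Finset.range (d+1), ∑ i ∈ B j, f i = ((chunkL j).map f).sum :=
      fun j _ => hBsum j f
    rw [Finset.sum_congr rfl h1, hchunkdef]
    rw [chunk_sum K l f (d+1) hlen]
    rw [hperm.map f |>.sum_eq]
    rw [← List.sum_toFinset f (Finset.nodup_toList _), Finset.toList_toFinset]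
  have hpoint : ∀ i : Fin d,
      restr (Finset.univ \ T0) h i = ∑ j ∈ Finset.range (d+1), restr (B j) h i := by
    intro i
    have := hglobal (fun a => if a = i then h i else 0)
    rw [Finset.sum_ite_eq' (Finset.univ \ T0) i (fun _ => h i)] at this
    have h2 : ∀ j ∈ Finset.range (d+1),
        ∑ a ∈ B j, (if a = i then h i else 0) = restr (B j) h i := by
      intro j _
      rw [Finset.sum_ite_eq' (B j) i (fun _ => h i)]
      simp [restr]
    rw [Finset.sum_congr rfl h2] at this
    rw [this]
    simp [restr]
  have hdecomp : h = restr (T0 ∪ B 0) h + ∑ j ∈ Finset.range d, restr (B (j+1)) h := by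
    funext i
    have hsplit : restr T0 h i + restr (Finset.univ \ T0) h i = h i := by
      by_cases hi : i ∈ T0 <;> simp [restr, hi]
    have hsum0 : ∑ j ∈ Finset.range (d+1), restr (B j) h i
        = ∑ j ∈ Finset.range d, restr (B (j+1)) h i + restr (B 0) h i :=
      Finset.sum_range_succ' _ d
    have hdisj : i ∈ T0 → i ∉ B 0 := by
      intro hi hib
      have := hBsub 0 hib
      rw [Finset.mem_sdiff] at this
      exact this.2 hi
    have hu : restr (T0 ∪ B 0) h i = restr T0 h i + restr (B 0) h i := by
      by_cases hi : i ∈ T0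
      · simp [restr, hi, hdisj hi]
      · by_cases hib : i ∈ B 0 <;> simp [restr, hi, hib]
    have hpt := hpoint i
    simp only [Pi.add_apply, Finset.sum_apply]
    rw [hu]
    rw [hpt, hsum0] at hsplit
    linarith
  have horder : ∀ (j : ℕ), ∀ a ∈ chunkL (j+1), ∀ b ∈ chunkL j, |h a| ≤ |h b| := by
    intro j a ha b hb
    have hp : ((l.take (K*(j+1))) ++ (l.drop (K*(j+1)))).Pairwise
        (fun a b => |h b| ≤ |h a|) := by
      rw [List.take_append_drop]; exact hsorted
    obtain ⟨-, -, hcross⟩ := List.pairwise_append.mp hp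
    have hbmem : b ∈ l.take (K*(j+1)) := by
      have : l.take (K*(j+1)) = l.take (K*j) ++ chunkL j := by
        rw [hchunkdef, Nat.mul_succ, List.take_add]
      rw [this]
      exact List.mem_append_right _ hb
    have hamem : a ∈ l.drop (K*(j+1)) := by
      rw [hchunkdef] at ha
      exact (List.take_sublist _ _).subset ha
    exact hcross b hbmem a hamem
  have hfull : ∀ j : ℕ, chunkL (j+1) ≠ [] → (chunkL j).length = K := by
    intro j hne
    have h1 : K*(j+1) < l.length := by
      by_contra hle
      push_neg at hle
      apply hne
      rw [hchunkdef]
      simp only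
      rw [List.drop_eq_nil_of_le hle]
      simp
    rw [hchunkdef]
    simp only [List.length_take, List.length_drop]
    rw [Nat.mul_succ] at h1
    omega
  have hsnonneg : ∀ j : ℕ, (0:ℝ) ≤ ∑ i ∈ B j, |h i| :=
    fun j => Finset.sum_nonneg fun i _ => abs_nonneg _
  have hblock : ∀ j : ℕ,
      l2norm (restr (B (j+1)) h) ≤ (∑ i ∈ B j, |h i|) / Real.sqrt K := by
    intro j
    by_cases hne : chunkL (j+1) = []
    · have : B (j+1) = ∅ := by rw [hBdef]; simp [hne]
      have hz : restr (B (j+1)) h = 0 := by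
        funext i; simp [restr, this]
      rw [hz]
      have : l2norm (0 : Fin d → ℝ) = 0 := by simp [l2norm]
      rw [this]
      positivity
    · have hcard : (B j).card = K := by
        rw [hBdef]
        simp only
        rw [List.toFinset_card_of_nodup (hchunknodup j), hfull j hne]
      set s := ∑ i ∈ B j, |h i| with hsdef
      have hsnn := hsnonneg j
      have hbd : ∀ i ∈ B (j+1), |h i| ≤ s / K := by
        intro i hi
        rw [hBdef, List.mem_toFinset] at hi
        have hKs : (K:ℝ) * |h i| ≤ s := by
          calc (K:ℝ) * |h i| = ∑ _b ∈ B j, |h i| := by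
                rw [Finset.sum_const, hcard, nsmul_eq_mul]
            _ ≤ ∑ b ∈ B j, |h b| := by
                apply Finset.sum_le_sum
                intro b hb
                rw [hBdef, List.mem_toFinset] at hb
                exact horder j i hi b hb
        have hK0 : (0:ℝ) < (K:ℝ) := by positivity
        rw [le_div_iff₀ hK0]
        linarith
      have hsq : l2norm (restr (B (j+1)) h) ^ 2 ≤ s^2 / K := by
        rw [l2norm_restr_sq]
        calc ∑ i ∈ B (j+1), h i ^ 2 ≤ ∑ _i ∈ B (j+1), (s/K)^2 := by
              apply Finset.sum_le_sum
              intro i hi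
              rw [← sq_abs]
              apply pow_le_pow_left₀ (abs_nonneg _) (hbd i hi)
          _ = (B (j+1)).card * (s/K)^2 := by rw [Finset.sum_const, nsmul_eq_mul]
          _ ≤ K * (s/K)^2 := by
              apply mul_le_mul_of_nonneg_right _ (by positivity)
              exact_mod_cast hBcard (j+1)
          _ = s^2/K := by
              have hK0 : (0:ℝ) ≠ (K:ℝ) := by positivity
              field_simp
      calc l2norm (restr (B (j+1)) h)
          = Real.sqrt (l2norm (restr (B (j+1)) h) ^ 2) :=
            (Real.sqrt_sq (l2norm_nonneg _)).symm
        _ ≤ Real.sqrt (s^2 / K) := Real.sqrt_le_sqrt hsq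
        _ = s / Real.sqrt K := by
            rw [Real.sqrt_div (sq_nonneg s), Real.sqrt_sq hsnn]
  -- feasibility of x itself, hence the cone condition
  have hxfeas : l2norm (A.mulVec x - (A.mulVec x + e)) ≤ σ := by
    have : A.mulVec x - (A.mulVec x + e) = -e := by abel
    rw [this, l2norm_neg]
    exact he
  have hl1 : l1norm xstar ≤ l1norm x := hmin x hxfeas
  have hcone : ∑ i ∈ Finset.univ \ T0, |h i| ≤ ∑ i ∈ T0, |h i| := by
    have hsplit : ∀ v : Fin d → ℝ,
        l1norm v = ∑ i ∈ Finset.univ \ T0, |v i| + ∑ i ∈ T0, |v i| := by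
      intro v
      rw [l1norm, ← Finset.sum_sdiff (Finset.subset_univ T0)]
    have h1 : l1norm xstar = ∑ i ∈ Finset.univ \ T0, |h i| + ∑ i ∈ T0, |x i + h i| := by
      rw [hsplit xstar]
      congr 1
      · apply Finset.sum_congr rfl
        intro i hi
        rw [Finset.mem_sdiff] at hi
        rw [hhdef]
        simp [hx0 i hi.2]
      · apply Finset.sum_congr rfl
        intro i _
        rw [hhdef]
        simp
    have h2 : l1norm x = ∑ i ∈ T0, |x i| := by
      rw [hsplit x]
      have : ∑ i ∈ Finset.univ \ T0, |x i| = 0 := by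
        apply Finset.sum_eq_zero
        intro i hi
        rw [Finset.mem_sdiff] at hi
        simp [hx0 i hi.2]
      linarith
    have h3 : ∑ i ∈ T0, |x i| ≤ ∑ i ∈ T0, |x i + h i| + ∑ i ∈ T0, |h i| := by
      rw [← Finset.sum_add_distrib]
      apply Finset.sum_le_sum
      intro i _
      calc |x i| = |(x i + h i) + (-h i)| := by ring_nf
        _ ≤ |x i + h i| + |(-h i)| := abs_add_le _ _
        _ = |x i + h i| + |h i| := by rw [abs_neg]
    rw [h1, h2] at hl1
    linarith
  -- the key quantity t
  set T01 := T0 ∪ B 0 with hT01def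
  set t := l2norm (restr T01 h) with htdef
  have htnonneg : 0 ≤ t := l2norm_nonneg _
  -- Cauchy-Schwarz
  have hCS : ∑ i ∈ T0, |h i| ≤ Real.sqrt S * t := by
    have hcs := Finset.sum_mul_sq_le_sq_mul_sq T0 (fun i => |h i|) (fun _ => (1:ℝ))
    simp only [mul_one, one_pow] at hcs
    have hcs2 : (∑ i ∈ T0, |h i|)^2 ≤ (∑ i ∈ T0, h i ^2) * S := by
      calc (∑ i ∈ T0, |h i|)^2 ≤ (∑ i ∈ T0, |h i|^2) * ∑ i ∈ T0, (1:ℝ) := hcs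
        _ = (∑ i ∈ T0, h i ^2) * T0.card := by
            simp [sq_abs, Finset.sum_const]
        _ ≤ (∑ i ∈ T0, h i ^2) * S := by
            apply mul_le_mul_of_nonneg_left _ (Finset.sum_nonneg fun i _ => sq_nonneg _)
            exact_mod_cast hT0card
    have hsub : ∑ i ∈ T0, h i ^2 ≤ t^2 := by
      rw [htdef, l2norm_restr_sq]
      apply Finset.sum_le_sum_of_subset_of_nonneg (Finset.subset_union_left)
      intro i _ _
      exact sq_nonneg _
    have hcs3 : (∑ i ∈ T0, |h i|)^2 ≤ (S:ℝ) * t^2 := by nlinarith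
    calc ∑ i ∈ T0, |h i| = Real.sqrt ((∑ i ∈ T0, |h i|)^2) :=
          (Real.sqrt_sq (Finset.sum_nonneg fun i _ => abs_nonneg _)).symm
      _ ≤ Real.sqrt ((S:ℝ) * t^2) := Real.sqrt_le_sqrt hcs3
      _ = Real.sqrt S * t := by
          rw [Real.sqrt_mul (by positivity), Real.sqrt_sq htnonneg]
  -- √S / √K = 1/√3
  have hsqK : Real.sqrt K = Real.sqrt 3 * Real.sqrt S := by
    rw [hKdef]
    push_cast
    rw [Real.sqrt_mul (by norm_num)]
  have hSpos : (0:ℝ) < Real.sqrt S := Real.sqrt_pos.mpr (by positivity)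
  -- total block sum bound
  have hblocksum : ∑ j ∈ Finset.range d, l2norm (restr (B (j+1)) h)
      ≤ (Real.sqrt 3)⁻¹ * t := by
    have hstep : ∑ j ∈ Finset.range d, l2norm (restr (B (j+1)) h)
        ≤ (∑ j ∈ Finset.range d, ∑ i ∈ B j, |h i|) / Real.sqrt K := by
      rw [Finset.sum_div]
      exact Finset.sum_le_sum fun j _ => hblock j
    have hstep2 : ∑ j ∈ Finset.range d, ∑ i ∈ B j, |h i|
        ≤ ∑ i ∈ Finset.univ \ T0, |h i| := by
      rw [← hglobal (fun i => |h i|), Finset.sum_range_succ]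
      have := hsnonneg d
      linarith
    have hchain : ∑ j ∈ Finset.range d, l2norm (restr (B (j+1)) h)
        ≤ (Real.sqrt S * t) / Real.sqrt K := by
      apply hstep.trans
      gcongr
      exact hstep2.trans (hcone.trans hCS)
    calc ∑ j ∈ Finset.range d, l2norm (restr (B (j+1)) h)
        ≤ (Real.sqrt S * t) / Real.sqrt K := hchain
      _ = (Real.sqrt 3)⁻¹ * t := by
          rw [hsqK]
          field_simp
  -- RIP bounds
  have h1mδ4 : (0:ℝ) ≤ 1 - δ4 := by linarith
  have hT01card : T01.card ≤ 4*S := by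
    calc T01.card ≤ T0.card + (B 0).card := Finset.card_union_le _ _
      _ ≤ S + K := Nat.add_le_add hT0card (hBcard 0)
      _ = 4*S := by omega
  have hlow : c1 * t ≤ l2norm (A.mulVec (restr T01 h)) := by
    have hrip := (hRIP4 _ (isSparse_restr T01 h hT01card)).1
    calc c1 * t = Real.sqrt ((1-δ4) * t^2) := by
          rw [Real.sqrt_mul h1mδ4, Real.sqrt_sq htnonneg, hc1def]
      _ ≤ Real.sqrt (l2norm (A.mulVec (restr T01 h))^2) := by
          apply Real.sqrt_le_sqrt
          rw [htdef]
          exact hrip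
      _ = l2norm (A.mulVec (restr T01 h)) := Real.sqrt_sq (l2norm_nonneg _)
  have hup : ∀ j : ℕ, l2norm (A.mulVec (restr (B (j+1)) h))
      ≤ Real.sqrt (1+δ3) * l2norm (restr (B (j+1)) h) := by
    intro j
    have hrip := (hRIP3 _ (isSparse_restr (B (j+1)) h (hBcard (j+1)))).2
    calc l2norm (A.mulVec (restr (B (j+1)) h))
        = Real.sqrt (l2norm (A.mulVec (restr (B (j+1)) h))^2) :=
          (Real.sqrt_sq (l2norm_nonneg _)).symm
      _ ≤ Real.sqrt ((1+δ3) * l2norm (restr (B (j+1)) h)^2) := Real.sqrt_le_sqrt hrip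
      _ = Real.sqrt (1+δ3) * l2norm (restr (B (j+1)) h) := by
          rw [Real.sqrt_mul (by linarith), Real.sqrt_sq (l2norm_nonneg _)]
  have hA2 : l2norm (A.mulVec h) ≤ 2*σ := by
    have heq : A.mulVec h = (A.mulVec xstar - (A.mulVec x + e)) + e := by
      rw [hhdef, Matrix.mulVec_sub]
      abel
    rw [heq]
    calc l2norm ((A.mulVec xstar - (A.mulVec x + e)) + e)
        ≤ l2norm (A.mulVec xstar - (A.mulVec x + e)) + l2norm e := l2norm_add_le _ _
      _ ≤ σ + σ := add_le_add hfeas he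
      _ = 2*σ := by ring
  have hsumA : A.mulVec (∑ j ∈ Finset.range d, restr (B (j+1)) h)
      = ∑ j ∈ Finset.range d, A.mulVec (restr (B (j+1)) h) := by
    simp only [← Matrix.mulVecLin_apply, map_sum]
  have h2 : A.mulVec h = A.mulVec (restr T01 h)
      + ∑ j ∈ Finset.range d, A.mulVec (restr (B (j+1)) h) := by
    have := congrArg A.mulVec hdecomp
    rw [Matrix.mulVec_add, hsumA] at this
    exact this
  have hAdecomp : l2norm (A.mulVec (restr T01 h)) ≤ l2norm (A.mulVec h)
      + ∑ j ∈ Finset.range d, l2norm (A.mulVec (restr (B (j+1)) h)) := by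
    have heq : A.mulVec (restr T01 h) = A.mulVec h
        + (-(∑ j ∈ Finset.range d, A.mulVec (restr (B (j+1)) h))) := by
      rw [← sub_eq_add_neg]
      exact eq_sub_of_add_eq h2.symm
    rw [heq]
    calc l2norm (A.mulVec h + (-(∑ j ∈ Finset.range d, A.mulVec (restr (B (j+1)) h))))
        ≤ l2norm (A.mulVec h)
          + l2norm (-(∑ j ∈ Finset.range d, A.mulVec (restr (B (j+1)) h))) :=
          l2norm_add_le _ _
      _ = l2norm (A.mulVec h)
          + l2norm (∑ j ∈ Finset.range d, A.mulVec (restr (B (j+1)) h)) := by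
          rw [l2norm_neg]
      _ ≤ l2norm (A.mulVec h)
          + ∑ j ∈ Finset.range d, l2norm (A.mulVec (restr (B (j+1)) h)) := by
          have := l2norm_sum_le (Finset.range d)
            (fun j => A.mulVec (restr (B (j+1)) h))
          linarith
  have hups : ∑ j ∈ Finset.range d, l2norm (A.mulVec (restr (B (j+1)) h))
      ≤ Real.sqrt (1+δ3) * ((Real.sqrt 3)⁻¹ * t) := by
    calc ∑ j ∈ Finset.range d, l2norm (A.mulVec (restr (B (j+1)) h))
        ≤ ∑ j ∈ Finset.range d, Real.sqrt (1+δ3) * l2norm (restr (B (j+1)) h) :=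
          Finset.sum_le_sum fun j _ => hup j
      _ = Real.sqrt (1+δ3) * ∑ j ∈ Finset.range d, l2norm (restr (B (j+1)) h) := by
          rw [Finset.mul_sum]
      _ ≤ Real.sqrt (1+δ3) * ((Real.sqrt 3)⁻¹ * t) :=
          mul_le_mul_of_nonneg_left hblocksum (Real.sqrt_nonneg _)
  have hkey : c1 * t ≤ 2*σ + c2 * t := by
    have hc2t : Real.sqrt (1+δ3) * ((Real.sqrt 3)⁻¹ * t) = c2 * t := by
      rw [hc2def]; ring
    rw [hc2t] at hups
    linarith
  have ht : t ≤ 2*σ / (c1 - c2) := by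
    rw [le_div_iff₀ (by linarith)]
    linarith
  have hfin : l2norm h ≤ (1 + (Real.sqrt 3)⁻¹) * t := by
    have heq := congrArg l2norm hdecomp
    rw [heq]
    calc l2norm (restr T01 h + ∑ j ∈ Finset.range d, restr (B (j+1)) h)
        ≤ l2norm (restr T01 h) + l2norm (∑ j ∈ Finset.range d, restr (B (j+1)) h) :=
          l2norm_add_le _ _
      _ ≤ t + ∑ j ∈ Finset.range d, l2norm (restr (B (j+1)) h) := by
          have := l2norm_sum_le (Finset.range d) (fun j => restr (B (j+1)) h)
          rw [htdef]
          linarith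
      _ ≤ t + (Real.sqrt 3)⁻¹ * t := by linarith
      _ = (1 + (Real.sqrt 3)⁻¹) * t := by ring
  have hi3 : (0:ℝ) ≤ 1 + (Real.sqrt 3)⁻¹ := by positivity
  calc l2norm (xstar - x) = l2norm h := by rw [hhdef]
    _ ≤ (1 + (Real.sqrt 3)⁻¹) * t := hfin
    _ ≤ (1 + (Real.sqrt 3)⁻¹) * (2*σ / (c1 - c2)) := mul_le_mul_of_nonneg_left ht hi3
    _ = C * σ := by
        rw [hCdef]
        ring
end

section
/- Let A ∈ ℝ^{m×d} and let S ≥ 1 be an integer such that the restricted isometry constants of A satisfy δ_{3S} + 3·δ_{4S} < 2. Then for every x ∈ ℝ^d supported on a set of cardinality at most S and y = Ax, the vector x is the unique minimizer of the problem min ‖z‖₁ subject to Az = y; that is, basis pursuit recovers x exactly from the noiseless measurements y. -/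
open Matrix

namespace Stmt5Aux

/-! ### Basic norm lemmas -/

lemma l2norm_nonneg {n : ℕ} (x : Fin n → ℝ) : 0 ≤ l2norm x := Real.sqrt_nonneg _

lemma l2norm_sq {n : ℕ} (x : Fin n → ℝ) : l2norm x ^ 2 = ∑ i, x i ^ 2 := by
  rw [l2norm, Real.sq_sqrt]; positivity

lemma l2norm_eq_norm {n : ℕ} (x : Fin n → ℝ) :
    l2norm x = ‖(WithLp.equiv 2 (Fin n → ℝ)).symm x‖ := by
  rw [EuclideanSpace.norm_eq]; simp [l2norm, sq_abs]

lemma l2norm_sum_le {n : ℕ} {ι : Type*} (s : Finset ι) (f : ι → (Fin n → ℝ)) :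
    l2norm (∑ j ∈ s, f j) ≤ ∑ j ∈ s, l2norm (f j) := by
  simp only [l2norm_eq_norm]
  have : (WithLp.equiv 2 (Fin n → ℝ)).symm (∑ j ∈ s, f j)
      = ∑ j ∈ s, (WithLp.equiv 2 (Fin n → ℝ)).symm (f j) := by
      exact map_sum (WithLp.linearEquiv 2 ℝ (Fin n → ℝ)).symm f s
  rw [this]
  exact norm_sum_le _ _

lemma l2norm_neg {n : ℕ} (x : Fin n → ℝ) : l2norm (-x) = l2norm x := by
  simp [l2norm]

lemma mulVec_sum' {m d : ℕ} (A : Matrix (Fin m) (Fin d) ℝ) {ι : Type*} (s : Finset ι)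
    (f : ι → (Fin d → ℝ)) :
    A.mulVec (∑ j ∈ s, f j) = ∑ j ∈ s, A.mulVec (f j) := by
  simp only [← Matrix.mulVecLin_apply, map_sum]

lemma le_sqrt_mul {a b c : ℝ} (ha : 0 ≤ a) (hb : 0 ≤ b) (hc : 0 ≤ c)
    (H : a ^ 2 ≤ c * b ^ 2) : a ≤ Real.sqrt c * b := by
  have h1 : a = Real.sqrt (a ^ 2) := (Real.sqrt_sq ha).symm
  rw [h1]
  calc Real.sqrt (a ^ 2) ≤ Real.sqrt (c * b ^ 2) := Real.sqrt_le_sqrt H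
    _ = Real.sqrt c * b := by rw [Real.sqrt_mul hc, Real.sqrt_sq hb]

/-! ### Restriction to a finset -/

/-- restriction of a vector to a finset -/
def rF {d : ℕ} (T : Finset (Fin d)) (h : Fin d → ℝ) : Fin d → ℝ :=
  fun i => if i ∈ T then h i else 0

lemma rF_union {d : ℕ} {T₁ T₂ : Finset (Fin d)} (hd : Disjoint T₁ T₂) (h : Fin d → ℝ) :
    rF (T₁ ∪ T₂) h = rF T₁ h + rF T₂ h := by
  funext i
  simp only [rF, Pi.add_apply, Finset.mem_union]
  by_cases h1 : i ∈ T₁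
  · have h2 : i ∉ T₂ := fun h2 => (Finset.disjoint_left.mp hd h1) h2
    simp [h1, h2]
  · by_cases h2 : i ∈ T₂ <;> simp [h1, h2]

lemma rF_empty {d : ℕ} (h : Fin d → ℝ) : rF (∅ : Finset (Fin d)) h = 0 := by
  funext i; simp [rF]

lemma rF_sparse {d S : ℕ} {T : Finset (Fin d)} (hT : T.card ≤ S) (h : Fin d → ℝ) :
    IsSparse S (rF T h) := by
  refine le_trans (Finset.card_le_card ?_) hT
  intro i hi
  simp only [Finset.mem_filter, rF] at hi
  by_contra hn
  simp [hn] at hi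

lemma l2sq_rF {d : ℕ} (T : Finset (Fin d)) (h : Fin d → ℝ) :
    l2norm (rF T h) ^ 2 = ∑ i ∈ T, h i ^ 2 := by
  rw [l2norm_sq]
  rw [← Finset.sum_subset (Finset.subset_univ T)]
  · exact Finset.sum_congr rfl fun i hi => by simp [rF, hi]
  · intro i _ hi; simp [rF, hi]

lemma rF_compl_add {d : ℕ} (T : Finset (Fin d)) (h : Fin d → ℝ) :
    rF T h + rF Tᶜ h = h := by
  funext i
  simp only [rF, Pi.add_apply, Finset.mem_compl]
  by_cases hi : i ∈ T <;> simp [hi]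

/-! ### Properties of the RIC -/

def RICset {m d : ℕ} (A : Matrix (Fin m) (Fin d) ℝ) (S : ℕ) : Set ℝ :=
  {δ : ℝ | 0 ≤ δ ∧ ∀ x : Fin d → ℝ, IsSparse S x →
    (1 - δ) * l2norm x ^ 2 ≤ l2norm (A.mulVec x) ^ 2 ∧
    l2norm (A.mulVec x) ^ 2 ≤ (1 + δ) * l2norm x ^ 2}

lemma RIC_eq {m d : ℕ} (A : Matrix (Fin m) (Fin d) ℝ) (S : ℕ) :
    RIC A S = sInf (RICset A S) := rfl

lemma RICset_nonempty {m d : ℕ} (A : Matrix (Fin m) (Fin d) ℝ) (S : ℕ) :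
    (RICset A S).Nonempty := by
  set F : ℝ := ∑ i, ∑ j, (A i j) ^ 2 with hF
  have hF0 : 0 ≤ F := by positivity
  refine ⟨max F 1, le_trans zero_le_one (le_max_right _ _), fun x _ => ?_⟩
  have hb : l2norm (A.mulVec x) ^ 2 ≤ F * l2norm x ^ 2 := by
    rw [l2norm_sq, l2norm_sq, hF, Finset.sum_mul]
    refine Finset.sum_le_sum fun i _ => ?_
    have := Finset.sum_mul_sq_le_sq_mul_sq Finset.univ (fun j => A i j) x
    simpa [Matrix.mulVec, dotProduct] using this
  have hx0 : 0 ≤ l2norm x ^ 2 := by rw [l2norm_sq]; positivity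
  have hAx0 : 0 ≤ l2norm (A.mulVec x) ^ 2 := by rw [l2norm_sq]; positivity
  constructor
  · nlinarith [le_max_right F 1]
  · nlinarith [le_max_left F 1]

lemma RIC_nonneg {m d : ℕ} (A : Matrix (Fin m) (Fin d) ℝ) (S : ℕ) : 0 ≤ RIC A S :=
  Real.sInf_nonneg fun _ hδ => hδ.1

lemma RIC_spec {m d : ℕ} (A : Matrix (Fin m) (Fin d) ℝ) (S : ℕ) (x : Fin d → ℝ)
    (hx : IsSparse S x) :
    (1 - RIC A S) * l2norm x ^ 2 ≤ l2norm (A.mulVec x) ^ 2 ∧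
    l2norm (A.mulVec x) ^ 2 ≤ (1 + RIC A S) * l2norm x ^ 2 := by
  have hx0 : 0 ≤ l2norm x ^ 2 := by rw [l2norm_sq]; positivity
  have key : ∀ ε : ℝ, 0 < ε →
      (1 - RIC A S - ε) * l2norm x ^ 2 ≤ l2norm (A.mulVec x) ^ 2 ∧
      l2norm (A.mulVec x) ^ 2 ≤ (1 + RIC A S + ε) * l2norm x ^ 2 := by
    intro ε hε
    obtain ⟨δ, hδ, hlt⟩ := Real.lt_sInf_add_pos (RICset_nonempty A S) hε
    rw [← RIC_eq] at hlt
    obtain ⟨h1, h2⟩ := hδ.2 x hx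
    constructor
    · refine le_trans ?_ h1
      apply mul_le_mul_of_nonneg_right _ hx0
      linarith
    · refine le_trans h2 ?_
      apply mul_le_mul_of_nonneg_right _ hx0
      linarith
  rcases eq_or_lt_of_le hx0 with h0 | h0
  · obtain ⟨k1, k2⟩ := key 1 one_pos
    rw [← h0] at k1 k2 ⊢
    constructor <;> linarith
  · constructor
    · refine le_of_forall_pos_le_add fun ε hε => ?_
      have := (key (ε / l2norm x ^ 2) (by positivity)).1
      have h' : (1 - RIC A S - ε / l2norm x ^ 2) * l2norm x ^ 2
          = (1 - RIC A S) * l2norm x ^ 2 - ε := by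
        rw [sub_mul, div_mul_cancel₀ _ h0.ne']
      linarith [h' ▸ this]
    · refine le_of_forall_pos_le_add fun ε hε => ?_
      have := (key (ε / l2norm x ^ 2) (by positivity)).2
      have h' : (1 + RIC A S + ε / l2norm x ^ 2) * l2norm x ^ 2
          = (1 + RIC A S) * l2norm x ^ 2 + ε := by
        rw [add_mul, div_mul_cancel₀ _ h0.ne']
      linarith [h' ▸ this]

/-! ### Blocks of a sorted list -/

lemma blocks_general {d : ℕ} {M₀ : Type*} [AddCommMonoid M₀] (μ : Finset (Fin d) → M₀)
    (hμ0 : μ ∅ = 0) (hμ : ∀ s t, Disjoint s t → μ (s ∪ t) = μ s + μ t)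
    (k : ℕ) :
    ∀ (M : ℕ) (l : List (Fin d)), l.Nodup → l.length ≤ M * k →
      μ l.toFinset = ∑ j ∈ Finset.range M, μ ((l.drop (j * k)).take k).toFinset := by
  intro M
  induction M with
  | zero =>
    intro l hnd hlen
    simp only [Nat.zero_mul, Nat.le_zero, List.length_eq_zero_iff] at hlen
    subst hlen
    simp [hμ0]
  | succ M ih =>
    intro l hnd hlen
    have hsplit : l = l.take k ++ l.drop k := (List.take_append_drop k l).symm
    have hnd' : (l.take k ++ l.drop k).Nodup := hsplit ▸ hnd
    have hdisj : Disjoint (l.take k).toFinset (l.drop k).toFinset := by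
      rw [List.disjoint_toFinset_iff_disjoint]
      intro a ha hb
      exact (List.nodup_append.mp hnd').2.2 a ha a hb rfl
    have hlen' : (l.drop k).length ≤ M * k := by
      rw [List.length_drop]
      rw [Nat.succ_mul] at hlen
      omega
    have ihd := ih (l.drop k) (List.Nodup.sublist (List.drop_sublist k l) hnd) hlen'
    have hμl : μ l.toFinset = μ (l.take k).toFinset + μ (l.drop k).toFinset := by
      conv_lhs => rw [hsplit]
      rw [List.toFinset_append, hμ _ _ hdisj]
    rw [hμl, ihd, Finset.sum_range_succ', add_comm]
    congr 1
    · refine Finset.sum_congr rfl fun j _ => ?_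
      congr 2
      rw [List.drop_drop]
      congr 1
      ring
    · simp

lemma exists_sorted_list {d : ℕ} (T : Finset (Fin d)) (h : Fin d → ℝ) :
    ∃ l : List (Fin d), l.Nodup ∧ l.toFinset = T ∧
      List.Pairwise (fun a b => |h b| ≤ |h a|) l := by
  set le : Fin d → Fin d → Bool := fun a b => decide (|h b| ≤ |h a|) with hle
  refine ⟨T.toList.mergeSort le, ?_, ?_, ?_⟩
  · exact (List.mergeSort_perm T.toList le).nodup_iff.mpr T.nodup_toList
  · rw [List.toFinset_eq_of_perm _ _ (List.mergeSort_perm T.toList le)]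
    exact Finset.toList_toFinset T
  · have := List.pairwise_mergeSort (le := le)
      (fun a b c hab hbc => by
        simp only [hle, decide_eq_true_eq] at *; exact le_trans hbc hab)
      (fun a b => by
        simp only [hle, Bool.or_eq_true, decide_eq_true_eq]; exact le_total _ _)
      T.toList
    refine this.imp ?_
    intro a b hab
    simpa [hle, decide_eq_true_eq] using hab

lemma block_l2_le {d k : ℕ} (hk : 1 ≤ k) (l : List (Fin d)) (hnd : l.Nodup)
    {h : Fin d → ℝ} (hp : List.Pairwise (fun a b => |h b| ≤ |h a|) l) (j : ℕ) (hj : 1 ≤ j) :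
    l2norm (rF ((l.drop (j * k)).take k).toFinset h) ≤
      (∑ i ∈ ((l.drop ((j - 1) * k)).take k).toFinset, |h i|) / Real.sqrt k := by
  set B2 := (l.drop (j * k)).take k with hB2
  set B1 := (l.drop ((j - 1) * k)).take k with hB1
  have hS1nn : 0 ≤ ∑ i ∈ B1.toFinset, |h i| := Finset.sum_nonneg fun i _ => abs_nonneg _
  have hsk : (0:ℝ) < Real.sqrt k := Real.sqrt_pos.mpr (by exact_mod_cast hk)
  rcases List.eq_nil_or_concat B2 with hB2nil | hne
  · rw [hB2nil]
    simp only [List.toFinset_nil]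
    have h1 : rF (∅ : Finset (Fin d)) h = 0 := by funext i; simp [rF]
    rw [h1]
    have h2 : l2norm (0 : Fin d → ℝ) = 0 := by simp [l2norm]
    rw [h2]
    positivity
  have hB2ne : B2 ≠ [] := by rcases hne with ⟨l', a, hcon⟩; simp [hcon]
  have hlt : j * k < l.length := by
    by_contra hge
    push_neg at hge
    have : l.drop (j * k) = [] := List.drop_eq_nil_of_le hge
    apply hB2ne
    rw [hB2, this, List.take_nil]
  have hlenB1 : B1.length = k := by
    rw [hB1, List.length_take, List.length_drop]
    have : (j - 1) * k + k ≤ l.length := by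
      have : (j - 1) * k + k = j * k := by
        cases j with
        | zero => omega
        | succ n => simp [Nat.succ_mul]
      omega
    omega
  have hndB1 : B1.Nodup := ((List.take_sublist _ _).trans (List.drop_sublist _ _)).nodup hnd
  have hndB2 : B2.Nodup := ((List.take_sublist _ _).trans (List.drop_sublist _ _)).nodup hnd
  have hcardB1 : B1.toFinset.card = k := by rw [List.toFinset_card_of_nodup hndB1, hlenB1]
  have hcardB2 : B2.toFinset.card ≤ k := by
    rw [List.toFinset_card_of_nodup hndB2, hB2]
    exact (List.length_take_le _ _)
  have hdom : ∀ a ∈ B2, ∀ b ∈ B1, |h a| ≤ |h b| := by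
    intro a ha b hb
    have hsp : l = l.take (j * k) ++ l.drop (j * k) := (List.take_append_drop _ _).symm
    have hp' := hsp ▸ hp
    have hkey := (List.pairwise_append.mp hp').2.2
    have hbmem : b ∈ l.take (j * k) := by
      have hjk : (j - 1) * k + k = j * k := by
        cases j with
        | zero => omega
        | succ n => simp [Nat.succ_mul]
      have hta : l.take ((j-1)*k + k) = l.take ((j-1)*k) ++ (l.drop ((j-1)*k)).take k :=
        List.take_add
      rw [hjk] at hta
      rw [hta]
      exact List.mem_append_right _ hb
    have hamem : a ∈ l.drop (j * k) := (List.take_subset _ _) ha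
    exact hkey b hbmem a hamem
  set c : ℝ := (∑ i ∈ B1.toFinset, |h i|) / k with hc
  have hc0 : 0 ≤ c := by positivity
  have habs_le : ∀ a ∈ B2.toFinset, |h a| ≤ c := by
    intro a ha
    rw [List.mem_toFinset] at ha
    have hka : (k : ℝ) * |h a| ≤ ∑ i ∈ B1.toFinset, |h i| := by
      have : ∑ i ∈ B1.toFinset, |h a| ≤ ∑ i ∈ B1.toFinset, |h i| :=
        Finset.sum_le_sum fun b hb => hdom a ha b (List.mem_toFinset.mp hb)
      simpa [hcardB1, Finset.sum_const, nsmul_eq_mul] using this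
    rw [hc, le_div_iff₀ (by exact_mod_cast hk : (0:ℝ) < k)]
    linarith
  have hsq : l2norm (rF B2.toFinset h) ^ 2 ≤ (k : ℝ) * c ^ 2 := by
    rw [l2sq_rF]
    calc ∑ i ∈ B2.toFinset, h i ^ 2 ≤ ∑ _i ∈ B2.toFinset, c ^ 2 := by
          refine Finset.sum_le_sum fun i hi => ?_
          have := habs_le i hi
          nlinarith [abs_nonneg (h i), sq_abs (h i)]
      _ = B2.toFinset.card * c ^ 2 := by simp [Finset.sum_const, nsmul_eq_mul]
      _ ≤ (k : ℝ) * c ^ 2 := by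
          apply mul_le_mul_of_nonneg_right _ (sq_nonneg c)
          exact_mod_cast hcardB2
  have hgoal : (k : ℝ) * c ^ 2 = ((∑ i ∈ B1.toFinset, |h i|) / Real.sqrt k) ^ 2 := by
    have hk0 : ((k:ℝ)) ≠ 0 := by positivity
    rw [hc, div_pow, div_pow, Real.sq_sqrt (by positivity : (0:ℝ) ≤ (k:ℝ))]
    field_simp
  rw [hgoal] at hsq
  have h2 : l2norm (rF B2.toFinset h) = Real.sqrt (l2norm (rF B2.toFinset h) ^ 2) :=
    (Real.sqrt_sq (l2norm_nonneg _)).symm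
  rw [h2]
  calc Real.sqrt (l2norm (rF B2.toFinset h) ^ 2)
      ≤ Real.sqrt (((∑ i ∈ B1.toFinset, |h i|) / Real.sqrt k) ^ 2) := Real.sqrt_le_sqrt hsq
    _ = (∑ i ∈ B1.toFinset, |h i|) / Real.sqrt k := Real.sqrt_sq (by positivity)

/-! ### The kernel (null space) lemma -/

lemma kernel_zero {m d : ℕ} (A : Matrix (Fin m) (Fin d) ℝ) (S : ℕ) (hS : 1 ≤ S)
    (hRIP : RIC A (3 * S) + 3 * RIC A (4 * S) < 2)
    (T₀ : Finset (Fin d)) (hT₀ : T₀.card ≤ S)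
    (h : Fin d → ℝ) (hker : A.mulVec h = 0)
    (hl1 : ∑ i ∈ T₀ᶜ, |h i| ≤ ∑ i ∈ T₀, |h i|) : h = 0 := by
  set δ3 := RIC A (3 * S) with hδ3def
  set δ4 := RIC A (4 * S) with hδ4def
  have hδ3nn : 0 ≤ δ3 := RIC_nonneg A _
  have hδ4nn : 0 ≤ δ4 := RIC_nonneg A _
  set k := 3 * S with hkdef
  have hk : 1 ≤ k := by omega
  obtain ⟨l, hnd, hlT, hp⟩ := exists_sorted_list T₀ᶜ h
  set N := l.length with hNdef
  have hlen : l.length ≤ (N + 1) * k := by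
    have : N + 1 ≤ (N + 1) * k := Nat.le_mul_of_pos_right _ (by omega)
    omega
  set blk : ℕ → Finset (Fin d) := fun j => ((l.drop (j * k)).take k).toFinset with hblk
  -- decompositions
  have hdec1 : rF T₀ᶜ h = ∑ j ∈ Finset.range (N + 1), rF (blk j) h := by
    rw [← hlT]
    exact blocks_general (fun s => rF s h) (rF_empty h) (fun s t hst => rF_union hst h)
      k (N + 1) l hnd hlen
  have hdec2 : ∑ i ∈ T₀ᶜ, |h i| = ∑ j ∈ Finset.range (N + 1), ∑ i ∈ blk j, |h i| := by
    rw [← hlT]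
    exact blocks_general (fun s => ∑ i ∈ s, |h i|) (by simp)
      (fun s t hst => Finset.sum_union hst) k (N + 1) l hnd hlen
  have hblkcard : ∀ j, (blk j).card ≤ k := fun j =>
    le_trans (List.toFinset_card_le _) (List.length_take_le _ _)
  have hblksub : ∀ j, blk j ⊆ T₀ᶜ := by
    intro j i hi
    rw [← hlT, List.mem_toFinset]
    rw [hblk] at hi
    simp only [List.mem_toFinset] at hi
    exact (List.drop_subset _ _) ((List.take_subset _ _) hi)
  set Ω := T₀ ∪ blk 0 with hΩdef
  have hdisj0 : Disjoint T₀ (blk 0) := by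
    rw [Finset.disjoint_left]
    intro i hi hib
    exact (Finset.mem_compl.mp (hblksub 0 hib)) hi
  have hΩcard : Ω.card ≤ 4 * S := by
    calc Ω.card ≤ T₀.card + (blk 0).card := Finset.card_union_le _ _
      _ ≤ S + k := add_le_add hT₀ (hblkcard 0)
      _ = 4 * S := by omega
  have hrΩ : rF Ω h = rF T₀ h + rF (blk 0) h := rF_union hdisj0 h
  -- h = rF Ω h + ∑_{j<N} rF (blk (j+1)) h
  have hdecomp : h = rF Ω h + ∑ j ∈ Finset.range N, rF (blk (j + 1)) h := by
    have h1 : rF T₀ h + rF T₀ᶜ h = h := rF_compl_add T₀ h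
    nth_rewrite 1 [← h1]
    rw [hdec1, Finset.sum_range_succ', hrΩ]
    abel
  -- Since A h = 0, A (rF Ω h) = - ∑ A (rF (blk (j+1)) h)
  have hAΩ : A.mulVec (rF Ω h) = - ∑ j ∈ Finset.range N, A.mulVec (rF (blk (j + 1)) h) := by
    have h0 := congrArg A.mulVec hdecomp
    rw [hker, Matrix.mulVec_add, mulVec_sum'] at h0
    exact eq_neg_of_add_eq_zero_left h0.symm
  set L := l2norm (rF Ω h) with hLdef
  have hLnn : 0 ≤ L := l2norm_nonneg _
  -- upper bound on ‖A (rF Ω h)‖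
  have hub : l2norm (A.mulVec (rF Ω h)) ≤ Real.sqrt (1 + δ3) / Real.sqrt 3 * L := by
    have e1 : l2norm (A.mulVec (rF Ω h))
        = l2norm (∑ j ∈ Finset.range N, A.mulVec (rF (blk (j + 1)) h)) := by
      rw [hAΩ, l2norm_neg]
    rw [e1]
    have e2 : l2norm (∑ j ∈ Finset.range N, A.mulVec (rF (blk (j + 1)) h))
        ≤ ∑ j ∈ Finset.range N, l2norm (A.mulVec (rF (blk (j + 1)) h)) :=
      l2norm_sum_le _ _
    have e3 : ∀ j, l2norm (A.mulVec (rF (blk (j + 1)) h))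
        ≤ Real.sqrt (1 + δ3) * l2norm (rF (blk (j + 1)) h) := by
      intro j
      apply le_sqrt_mul (l2norm_nonneg _) (l2norm_nonneg _) (by linarith)
      exact (RIC_spec A (3 * S) _ (rF_sparse (hblkcard (j + 1)) h)).2
    have e4 : ∀ j, l2norm (rF (blk (j + 1)) h) ≤ (∑ i ∈ blk j, |h i|) / Real.sqrt k := by
      intro j
      have := block_l2_le hk l hnd hp (j + 1) (by omega)
      simpa [hblk] using this
    have e5 : ∑ j ∈ Finset.range N, (∑ i ∈ blk j, |h i|)
        ≤ ∑ i ∈ T₀ᶜ, |h i| := by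
      rw [hdec2, Finset.sum_range_succ]
      have : 0 ≤ ∑ i ∈ blk N, |h i| := Finset.sum_nonneg fun i _ => abs_nonneg _
      linarith
    -- Cauchy-Schwarz on T₀
    have e6 : ∑ i ∈ T₀, |h i| ≤ Real.sqrt S * l2norm (rF T₀ h) := by
      apply le_sqrt_mul (Finset.sum_nonneg fun i _ => abs_nonneg _) (l2norm_nonneg _)
        (by positivity)
      rw [l2sq_rF]
      have hcs := Finset.sum_mul_sq_le_sq_mul_sq T₀ (fun _ => (1:ℝ)) (fun i => |h i|)
      simp only [one_pow, one_mul, Finset.sum_const, nsmul_eq_mul, mul_one, sq_abs] at hcs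
      calc (∑ i ∈ T₀, |h i|) ^ 2 ≤ T₀.card * ∑ i ∈ T₀, h i ^ 2 := hcs
        _ ≤ (S : ℝ) * ∑ i ∈ T₀, h i ^ 2 := by
            apply mul_le_mul_of_nonneg_right _ (Finset.sum_nonneg fun i _ => sq_nonneg _)
            exact_mod_cast hT₀
    have e7 : l2norm (rF T₀ h) ≤ L := by
      rw [hLdef]
      have h1 : l2norm (rF T₀ h) ^ 2 ≤ l2norm (rF Ω h) ^ 2 := by
        rw [l2sq_rF, l2sq_rF]
        exact Finset.sum_le_sum_of_subset_of_nonneg (Finset.subset_union_left)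
          (fun i _ _ => sq_nonneg _)
      nlinarith [l2norm_nonneg (rF T₀ h), l2norm_nonneg (rF Ω h)]
    -- combine
    have hsk : (0:ℝ) < Real.sqrt k := Real.sqrt_pos.mpr (by positivity)
    have hs3 : (0:ℝ) < Real.sqrt 3 := Real.sqrt_pos.mpr (by norm_num)
    have hsS : (0:ℝ) < Real.sqrt S := Real.sqrt_pos.mpr (by positivity)
    have hkeq : Real.sqrt k = Real.sqrt 3 * Real.sqrt S := by
      rw [hkdef]
      rw [show ((3 * S : ℕ) : ℝ) = 3 * (S:ℝ) by push_cast; ring]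
      exact Real.sqrt_mul (by norm_num) _
    calc l2norm (∑ j ∈ Finset.range N, A.mulVec (rF (blk (j + 1)) h))
        ≤ ∑ j ∈ Finset.range N, l2norm (A.mulVec (rF (blk (j + 1)) h)) := e2
      _ ≤ ∑ j ∈ Finset.range N, Real.sqrt (1 + δ3) * l2norm (rF (blk (j + 1)) h) :=
          Finset.sum_le_sum fun j _ => e3 j
      _ = Real.sqrt (1 + δ3) * ∑ j ∈ Finset.range N, l2norm (rF (blk (j + 1)) h) := by
          rw [Finset.mul_sum]
      _ ≤ Real.sqrt (1 + δ3) * ∑ j ∈ Finset.range N, (∑ i ∈ blk j, |h i|) / Real.sqrt k := by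
          apply mul_le_mul_of_nonneg_left _ (Real.sqrt_nonneg _)
          exact Finset.sum_le_sum fun j _ => e4 j
      _ = Real.sqrt (1 + δ3) * ((∑ j ∈ Finset.range N, ∑ i ∈ blk j, |h i|) / Real.sqrt k) := by
          rw [← Finset.sum_div]
      _ ≤ Real.sqrt (1 + δ3) * ((∑ i ∈ T₀, |h i|) / Real.sqrt k) := by
          gcongr
          exact le_trans e5 hl1
      _ ≤ Real.sqrt (1 + δ3) * ((Real.sqrt S * L) / Real.sqrt k) := by
          gcongr
          exact e6.trans (mul_le_mul_of_nonneg_left e7 (Real.sqrt_nonneg _))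
      _ = Real.sqrt (1 + δ3) / Real.sqrt 3 * L := by
          rw [hkeq]
          field_simp
  -- lower bound
  have hlb : (1 - δ4) * L ^ 2 ≤ l2norm (A.mulVec (rF Ω h)) ^ 2 :=
    (RIC_spec A (4 * S) _ (rF_sparse hΩcard h)).1
  -- combine to get L = 0
  have hL0 : L = 0 := by
    by_contra hLne
    have hLpos : 0 < L := lt_of_le_of_ne hLnn (Ne.symm hLne)
    have hub2 : l2norm (A.mulVec (rF Ω h)) ^ 2 ≤ (1 + δ3) / 3 * L ^ 2 := by
      have hnn : 0 ≤ Real.sqrt (1 + δ3) / Real.sqrt 3 * L := by positivity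
      have := mul_self_le_mul_self (l2norm_nonneg (A.mulVec (rF Ω h))) hub
      have heq : (Real.sqrt (1 + δ3) / Real.sqrt 3 * L) ^ 2 = (1 + δ3) / 3 * L ^ 2 := by
        rw [mul_pow, div_pow, Real.sq_sqrt (by linarith), Real.sq_sqrt (by norm_num)]
      nlinarith [this]
    nlinarith [sq_nonneg L, mul_pos hLpos hLpos]
  -- conclude h = 0
  have hsum0 : ∑ i ∈ Ω, h i ^ 2 = 0 := by
    rw [← l2sq_rF]
    rw [← hLdef] at *
    rw [hL0]
    ring
  have hT₀0 : ∀ i ∈ T₀, h i = 0 := by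
    intro i hi
    have := (Finset.sum_eq_zero_iff_of_nonneg (fun i _ => sq_nonneg (h i))).mp hsum0 i
      (Finset.mem_union_left _ hi)
    exact pow_eq_zero_iff (by norm_num) |>.mp this
  have hT₀sum : ∑ i ∈ T₀, |h i| = 0 :=
    Finset.sum_eq_zero fun i hi => by rw [hT₀0 i hi, abs_zero]
  have hcompl0 : ∀ i ∈ T₀ᶜ, h i = 0 := by
    have hle : ∑ i ∈ T₀ᶜ, |h i| ≤ 0 := hT₀sum ▸ hl1
    have hge : 0 ≤ ∑ i ∈ T₀ᶜ, |h i| := Finset.sum_nonneg fun i _ => abs_nonneg _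
    have heq0 : ∑ i ∈ T₀ᶜ, |h i| = 0 := le_antisymm hle hge
    intro i hi
    have := (Finset.sum_eq_zero_iff_of_nonneg (fun i _ => abs_nonneg (h i))).mp heq0 i hi
    exact abs_eq_zero.mp this
  funext i
  by_cases hi : i ∈ T₀
  · exact hT₀0 i hi
  · exact hcompl0 i (Finset.mem_compl.mpr hi)

end Stmt5Aux

open Stmt5Aux in
/-- Exact recovery by basis pursuit: if `δ_{3S} + 3δ_{4S} < 2`, then every `S`-sparse `x` is the
unique minimizer of `min ‖z‖₁ s.t. Az = Ax`. -/
theorem stmt5 {m d : ℕ} (A : Matrix (Fin m) (Fin d) ℝ) (S : ℕ) (hS : 1 ≤ S)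
    (hRIP : RIC A (3 * S) + 3 * RIC A (4 * S) < 2) :
    ∀ x : Fin d → ℝ, IsSparse S x →
      (∀ z : Fin d → ℝ, A.mulVec z = A.mulVec x → l1norm x ≤ l1norm z) ∧
      (∀ z : Fin d → ℝ, A.mulVec z = A.mulVec x → l1norm z ≤ l1norm x → z = x) := by
  intro x hx
  set T₀ : Finset (Fin d) := Finset.univ.filter (fun i => x i ≠ 0) with hT₀def
  have hT₀card : T₀.card ≤ S := hx
  -- key inequality for any feasible z
  have key : ∀ z : Fin d → ℝ, A.mulVec z = A.mulVec x → l1norm z ≤ l1norm x → z = x := by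
    intro z hz hle
    set h : Fin d → ℝ := z - x with hhdef
    have hker : A.mulVec h = 0 := by
      rw [hhdef, ← Matrix.mulVecLin_apply, map_sub, Matrix.mulVecLin_apply,
        Matrix.mulVecLin_apply, hz, sub_self]
    -- x vanishes outside T₀
    have hxout : ∀ i ∈ T₀ᶜ, x i = 0 := by
      intro i hi
      rw [Finset.mem_compl, hT₀def, Finset.mem_filter] at hi
      push_neg at hi
      exact hi (Finset.mem_univ i)
    -- l1 z ≥ l1 x - ∑_{T₀}|h| + ∑_{T₀ᶜ}|h|
    have hsplit : ∀ w : Fin d → ℝ, l1norm w = ∑ i ∈ T₀, |w i| + ∑ i ∈ T₀ᶜ, |w i| := by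
      intro w
      rw [l1norm, ← Finset.sum_add_sum_compl T₀]
    have hxeq : l1norm x = ∑ i ∈ T₀, |x i| := by
      rw [hsplit x]
      have : ∑ i ∈ T₀ᶜ, |x i| = 0 :=
        Finset.sum_eq_zero fun i hi => by rw [hxout i hi, abs_zero]
      linarith
    have hz_eq : ∀ i, z i = x i + h i := fun i => by simp [hhdef]
    have hbound : l1norm x - ∑ i ∈ T₀, |h i| + ∑ i ∈ T₀ᶜ, |h i| ≤ l1norm z := by
      have hb1 : ∑ i ∈ T₀ᶜ, |z i| = ∑ i ∈ T₀ᶜ, |h i| :=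
        Finset.sum_congr rfl fun i hi => by rw [hz_eq i, hxout i hi, zero_add]
      have hb2 : ∑ i ∈ T₀, |x i| - ∑ i ∈ T₀, |h i| ≤ ∑ i ∈ T₀, |z i| := by
        rw [← Finset.sum_sub_distrib]
        refine Finset.sum_le_sum fun i _ => ?_
        have hxi : x i = z i - h i := by have := hz_eq i; linarith
        have habs : |x i| ≤ |z i| + |h i| := by
          rw [hxi, sub_eq_add_neg]
          exact (abs_add_le _ _).trans (by rw [abs_neg])
        linarith
      rw [hsplit z, hxeq]
      linarith
    have hl1 : ∑ i ∈ T₀ᶜ, |h i| ≤ ∑ i ∈ T₀, |h i| := by linarith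
    have hzero := kernel_zero A S hS hRIP T₀ hT₀card h hker hl1
    have : z - x = 0 := hzero
    exact sub_eq_zero.mp this
  constructor
  · intro z hz
    by_contra hc
    push_neg at hc
    have := key z hz (le_of_lt hc)
    rw [this] at hc
    exact lt_irrefl _ hc
  · exact key
end
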